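/- Let (X, ‖·‖) be a real Banach space and let T : X → X be a (b, θ)-enriched contraction, i.e., there exist b ∈ [0,∞) and θ ∈ [0, b+1) such that ‖b(u−v) + Tu − Tv‖ ≤ θ‖u−v‖ for all u, v ∈ X. Then T has a unique fixed point p ∈ X, and there exists λ ∈ (0,1] such that for every u₀ ∈ X the sequence defined by u_{n+1} = (1−λ)u_n + λT u_n (n ≥ 0) converges to p. -/

import Mathlib

/-- A `(b, θ)`-enriched contraction on a real Banach space has a unique fixed point `p`,
and there is `λ ∈ (0,1]` such that every Krasnoselskii iteration
`u_{n+1} = (1-λ) u_n + λ T u_n` converges to `p`. -/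
theorem enriched_contraction_fixedPoint
    {X : Type*} [NormedAddCommGroup X] [NormedSpace ℝ X] [CompleteSpace X]
    (T : X → X) (b θ : ℝ) (hb : 0 ≤ b) (hθ0 : 0 ≤ θ) (hθ : θ < b + 1)
    (hT : ∀ u v : X, ‖b • (u - v) + T u - T v‖ ≤ θ * ‖u - v‖) :
    ∃ p : X, (T p = p ∧ ∀ q : X, T q = q → q = p) ∧
      ∃ lam : ℝ, 0 < lam ∧ lam ≤ 1 ∧
        ∀ u : ℕ → X, (∀ n : ℕ, u (n + 1) = (1 - lam) • u n + lam • T (u n)) →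
          Filter.Tendsto u Filter.atTop (nhds p) := by
  have hb1 : (0:ℝ) < b + 1 := by linarith
  set lam : ℝ := 1 / (b + 1) with hlam
  have hlam0 : 0 < lam := by positivity
  have hlam1 : lam ≤ 1 := by
    rw [hlam, div_le_one hb1]; linarith
  set S : X → X := fun x => (1 - lam) • x + lam • T x with hS
  have key : ∀ u v : X, ‖S u - S v‖ ≤ (θ / (b + 1)) * ‖u - v‖ := by
    intro u v
    have h1 : 1 - lam = lam * b := by
      rw [hlam, div_mul_eq_mul_div, one_mul, eq_div_iff hb1.ne', sub_mul, one_div_mul_cancel hb1.ne']; ring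
    have h2 : S u - S v = lam • (b • (u - v) + T u - T v) := by
      simp only [hS, smul_add, smul_sub, smul_smul, h1]
      module
    rw [h2, norm_smul, Real.norm_eq_abs, abs_of_pos hlam0]
    calc lam * ‖b • (u - v) + T u - T v‖ ≤ lam * (θ * ‖u - v‖) := by
          exact mul_le_mul_of_nonneg_left (hT u v) hlam0.le
      _ = (θ / (b + 1)) * ‖u - v‖ := by rw [hlam]; ring
  set c : ℝ := θ / (b + 1) with hc
  have hc0 : 0 ≤ c := by positivity
  have hc1 : c < 1 := by
    rw [hc, div_lt_one hb1]; exact hθ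
  have hcontr : ContractingWith ⟨c, hc0⟩ S := by
    constructor
    · exact_mod_cast hc1
    · apply LipschitzWith.of_dist_le_mul
      intro u v
      rw [dist_eq_norm, dist_eq_norm]; exact key u v
  refine ⟨hcontr.fixedPoint S, ⟨?_, ?_⟩, lam, hlam0, hlam1, ?_⟩
  · -- T p = p
    have hfp : S (hcontr.fixedPoint S) = hcontr.fixedPoint S := hcontr.fixedPoint_isFixedPt
    set p := hcontr.fixedPoint S
    have h := hfp
    simp only [hS] at h
    have h4 : lam • (T p - p) = 0 := by
      linear_combination (norm := module) h
    rcases smul_eq_zero.mp h4 with h5 | h5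
    · exact absurd h5 (ne_of_gt hlam0)
    · exact sub_eq_zero.mp h5
  · intro q hq
    have hSq : S q = q := by
      simp [hS, hq, smul_sub, sub_smul, one_smul]
    exact hcontr.fixedPoint_unique hSq
  · intro u hu
    have hiter : ∀ n, u n = S^[n] (u 0) := by
      intro n
      induction n with
      | zero => simp
      | succ n ih => rw [Function.iterate_succ_apply', ← ih, hu n]
    have := hcontr.tendsto_iterate_fixedPoint (u 0)
    exact this.congr fun n => (hiter n).symm
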